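/- Let B be a topological group and let A be a subgroup of B equipped with a topology making A a topological group and such that the inclusion map A → B is continuous. Let X be a topological group, f : X → B an injective continuous group homomorphism, and U a normal subgroup of X, equipped with a topology making it a topological group, such that f restricts to an isomorphism of topological groups from U onto A and such that the conjugation map U × X → U, (u,x) ↦ x⁻¹ u x, is continuous. Then the image f(X) is contained in the subgroup N = { b ∈ B | for every open subset U' of A, both bU'b⁻¹ and b⁻¹U'b are contained in A and are open subsets of A }. -/

import Mathlib

open Topology

private lemma stmt2_aux {B : Type*} [Group B] [TopologicalSpace B] [IsTopologicalGroup B]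
    (A : Subgroup B) (tA : TopologicalSpace A)
    {X : Type*} [Group X] [TopologicalSpace X] [IsTopologicalGroup X]
    (f : X →* B)
    (U : Subgroup X) (hU : U.Normal) (tU : TopologicalSpace U)
    (e : U ≃* A)
    (he : ∀ u : U, ((e u : A) : B) = f u)
    (hecont : Continuous[tU, tA] e)
    (hesymm : Continuous[tA, tU] e.symm)
    (hconj : ∀ ψ : U × X → U,
      (∀ p : U × X, (ψ p : X) = p.2⁻¹ * (p.1 : X) * p.2) →
      Continuous[@instTopologicalSpaceProd U X tU inferInstance, tU] ψ)
    (c : X) (U' : Set A) (hU' : IsOpen[tA] U') :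
    (fun u : A => f c * (u : B) * (f c)⁻¹) '' U' ⊆ (A : Set B) ∧
      IsOpen[tA] {x : A | (x : B) ∈ (fun u : A => f c * (u : B) * (f c)⁻¹) '' U'} := by
  letI := tU
  letI := tA
  set ψ : U × X → U := fun p => ⟨p.2⁻¹ * (p.1 : X) * p.2, by
    simpa using hU.conj_mem _ p.1.2 p.2⁻¹⟩ with hψ
  have hψcoe : ∀ p : U × X, (ψ p : X) = p.2⁻¹ * (p.1 : X) * p.2 := fun p => rfl
  have key : ∀ (d : X) (a : A), ((e (ψ (e.symm a, d⁻¹)) : A) : B) = f d * a * (f d)⁻¹ := by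
    intro d a
    rw [he]
    have h1 : (ψ (e.symm a, d⁻¹) : X) = d * (e.symm a : X) * d⁻¹ := by
      rw [hψcoe]; simp
    calc f (ψ (e.symm a, d⁻¹) : X) = f (d * (e.symm a : X) * d⁻¹) := by rw [h1]
      _ = f d * ((e (e.symm a) : A) : B) * (f d)⁻¹ := by rw [map_mul, map_mul, map_inv, he]
      _ = f d * a * (f d)⁻¹ := by rw [e.apply_symm_apply]
  set φ : A → A := fun a => e (ψ (e.symm a, c⁻¹)) with hφ
  set φ' : A → A := fun a => e (ψ (e.symm a, c)) with hφ'
  have keyφ : ∀ a : A, ((φ a : A) : B) = f c * a * (f c)⁻¹ := fun a => key c a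
  have keyφ' : ∀ a : A, ((φ' a : A) : B) = (f c)⁻¹ * a * f c := by
    intro a
    have := key c⁻¹ a
    simpa using this
  have coeinj : Function.Injective (fun a : A => (a : B)) := Subtype.val_injective
  have hφ'φ : ∀ a, φ' (φ a) = a := by
    intro a; apply coeinj; show ((φ' (φ a) : A) : B) = a
    rw [keyφ', keyφ]; group
  have hφφ' : ∀ a, φ (φ' a) = a := by
    intro a; apply coeinj; show ((φ (φ' a) : A) : B) = a
    rw [keyφ, keyφ']; group
  constructor
  · rintro _ ⟨a, ha, rfl⟩
    show f c * (a : B) * (f c)⁻¹ ∈ (A : Set B)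
    rw [← keyφ a]
    exact (φ a).2
  · have hset : {x : A | (x : B) ∈ (fun u : A => f c * (u : B) * (f c)⁻¹) '' U'} = φ' ⁻¹' U' := by
      ext x
      constructor
      · rintro ⟨a, ha, hx⟩
        have : φ a = x := coeinj (by show ((φ a : A) : B) = x; rw [keyφ a]; exact hx)
        rw [← this]; simpa [hφ'φ] using ha
      · intro hx
        exact ⟨φ' x, hx, by show f c * ((φ' x : A) : B) * (f c)⁻¹ = (x : B); rw [keyφ']; group⟩
    rw [hset]
    have hφ'cont : Continuous φ' := by
      have hψc : Continuous ψ := hconj ψ hψcoe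
      have : Continuous (fun u : U => ψ (u, c)) :=
        hψc.comp (continuous_id.prodMk continuous_const)
      exact hecont.comp (this.comp hesymm)
    exact hφ'cont.isOpen_preimage U' hU'

theorem stmt2 {B : Type*} [Group B] [TopologicalSpace B] [IsTopologicalGroup B]
    (A : Subgroup B) (tA : TopologicalSpace A)
    (_ : @IsTopologicalGroup A tA _)
    (hincl : Continuous[tA, inferInstance] (fun a : A => (a : B)))
    {X : Type*} [Group X] [TopologicalSpace X] [IsTopologicalGroup X]
    (f : X →* B) (hfinj : Function.Injective f) (hfcont : Continuous f)
    (U : Subgroup X) (hU : U.Normal) (tU : TopologicalSpace U)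
    (_ : @IsTopologicalGroup U tU _)
    (e : U ≃* A)
    (he : ∀ u : U, ((e u : A) : B) = f u)
    (hecont : Continuous[tU, tA] e)
    (hesymm : Continuous[tA, tU] e.symm)
    (hconj : ∀ ψ : U × X → U,
      (∀ p : U × X, (ψ p : X) = p.2⁻¹ * (p.1 : X) * p.2) →
      Continuous[@instTopologicalSpaceProd U X tU inferInstance, tU] ψ) :
    Set.range f ⊆
      {b : B | ∀ U' : Set A, IsOpen[tA] U' →
        ((fun u : A => b * (u : B) * b⁻¹) '' U' ⊆ (A : Set B) ∧
          IsOpen[tA] {x : A | (x : B) ∈ (fun u : A => b * (u : B) * b⁻¹) '' U'}) ∧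
        ((fun u : A => b⁻¹ * (u : B) * b) '' U' ⊆ (A : Set B) ∧
          IsOpen[tA] {x : A | (x : B) ∈ (fun u : A => b⁻¹ * (u : B) * b) '' U'})} := by
  rintro _ ⟨x, rfl⟩ U' hU'
  refine ⟨stmt2_aux A tA f U hU tU e he hecont hesymm hconj x U' hU', ?_⟩
  have := stmt2_aux A tA f U hU tU e he hecont hesymm hconj x⁻¹ U' hU'
  simpa using this
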